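/- (Farkas lemma, functional form) Let E be a real vector space, f, g₁, …, gₙ : E → ℝ linear functionals. Then f(x) ≥ 0 for every x with g₁(x) ≥ 0, …, gₙ(x) ≥ 0 if and only if there exist nonnegative reals λ₁, …, λₙ with f = λ₁ g₁ + ⋯ + λₙ gₙ. -/

import Mathlib

private theorem farkas_aux {E : Type*} [AddCommGroup E] [Module ℝ E] :
    ∀ (n : ℕ) (f : E →ₗ[ℝ] ℝ) (g : Fin n → E →ₗ[ℝ] ℝ),
    (∀ x : E, (∀ i, 0 ≤ g i x) → 0 ≤ f x) →
      ∃ lam : Fin n → ℝ, (∀ i, 0 ≤ lam i) ∧ f = ∑ i, lam i • g i := by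
  intro n
  induction n with
  | zero =>
    intro f g h
    refine ⟨0, fun i => le_rfl, ?_⟩
    have hf : ∀ x, f x = 0 := fun x => by
      have h1 := h x (fun i => i.elim0)
      have h2 := h (-x) (fun i => i.elim0)
      simp only [map_neg] at h2
      linarith
    ext x
    simp [hf x]
  | succ n ih =>
    intro f g h
    by_cases H : ∀ x : E, (∀ i : Fin n, 0 ≤ g i.castSucc x) → 0 ≤ f x
    · obtain ⟨lam, hlam, hf⟩ := ih f (fun i => g i.castSucc) H
      refine ⟨Fin.snoc lam 0, ?_, ?_⟩
      · intro i
        refine Fin.lastCases ?_ ?_ i <;> simp [hlam]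
      · rw [Fin.sum_univ_castSucc]
        simpa using hf
    · push_neg at H
      obtain ⟨x₀, hx₀, hfx₀⟩ := H
      set a : E →ₗ[ℝ] ℝ := g (Fin.last n) with ha
      have hax₀ : a x₀ < 0 := by
        by_contra hc
        push_neg at hc
        have : 0 ≤ f x₀ := by
          refine h x₀ ?_
          intro i
          refine Fin.lastCases ?_ ?_ i
          · exact hc
          · exact hx₀
        linarith
      set μ : ℝ := f x₀ / a x₀ with hμ
      have hμpos : 0 < μ := div_pos_of_neg_of_neg hfx₀ hax₀
      set c : Fin n → ℝ := fun i => g i.castSucc x₀ / a x₀ with hc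
      set f' : E →ₗ[ℝ] ℝ := f - μ • a with hf'
      set g' : Fin n → E →ₗ[ℝ] ℝ := fun i => g i.castSucc - c i • a with hg'
      have hne : a x₀ ≠ 0 := hax₀.ne
      have key : ∀ x : E, (∀ i : Fin n, 0 ≤ g' i x) → 0 ≤ f' x := by
        intro x hx
        set t : ℝ := a x / a x₀ with ht
        set y : E := x - t • x₀ with hy
        have hay : a y = 0 := by
          simp [hy, ht, map_sub, map_smul, smul_eq_mul]
          field_simp [hne]
          ring
        have hgy : ∀ i : Fin n, g i.castSucc y = g' i x := by
          intro i
          simp only [hy, hg', map_sub, map_smul, smul_eq_mul, LinearMap.sub_apply,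
            LinearMap.smul_apply, hc, ht]
          field_simp [hne]
        have hfy : 0 ≤ f y := by
          refine h y ?_
          intro i
          refine Fin.lastCases ?_ ?_ i
          · rw [← ha, hay]
          · intro i; rw [hgy i]; exact hx i
        have hfy' : f' x = f y := by
          simp only [hf', hy, map_sub, map_smul, smul_eq_mul, LinearMap.sub_apply,
            LinearMap.smul_apply, hμ, ht]
          field_simp [hne]
        linarith [hfy, hfy'.ge]
      obtain ⟨lam, hlam, hfeq⟩ := ih f' g' key
      set lamN : ℝ := μ - ∑ i, lam i * c i with hlamN
      have happ : ∀ x : E, f x = (∑ i, lam i * g i.castSucc x) + lamN * a x := by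
        intro x
        have h1 := LinearMap.congr_fun hfeq x
        simp only [hf', hg', LinearMap.sub_apply, LinearMap.smul_apply, smul_eq_mul,
          LinearMap.coe_sum, Finset.sum_apply] at h1
        have h2 : ∑ i, lam i * (g i.castSucc x - c i * a x)
            = (∑ i, lam i * g i.castSucc x) - (∑ i, lam i * c i) * a x := by
          rw [Finset.sum_mul]
          rw [← Finset.sum_sub_distrib]
          congr 1
          ext i
          ring
        rw [h2] at h1
        simp only [hlamN]
        linarith
      have hlamNpos : 0 ≤ lamN := by
        by_contra hcon
        push_neg at hcon
        have h3 := happ x₀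
        have h4 : 0 ≤ ∑ i, lam i * g i.castSucc x₀ :=
          Finset.sum_nonneg fun i _ => mul_nonneg (hlam i) (hx₀ i)
        have h5 : 0 < lamN * a x₀ := mul_pos_of_neg_of_neg hcon hax₀
        linarith
      refine ⟨Fin.snoc lam lamN, ?_, ?_⟩
      · intro i
        refine Fin.lastCases ?_ ?_ i <;> simp [hlamNpos, hlam]
      · ext x
        rw [Fin.sum_univ_castSucc]
        simp only [Fin.snoc_castSucc, Fin.snoc_last, LinearMap.add_apply,
          LinearMap.coe_sum, Finset.sum_apply, LinearMap.smul_apply, smul_eq_mul]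
        simpa using happ x

/-- Farkas lemma, functional form, on a finite-dimensional real vector space. -/
theorem farkas_lemma
    {E : Type*} [AddCommGroup E] [Module ℝ E] [FiniteDimensional ℝ E]
    {n : ℕ} (f : E →ₗ[ℝ] ℝ) (g : Fin n → E →ₗ[ℝ] ℝ) :
    (∀ x : E, (∀ i, 0 ≤ g i x) → 0 ≤ f x) ↔
      ∃ lam : Fin n → ℝ, (∀ i, 0 ≤ lam i) ∧ f = ∑ i, lam i • g i := by
  constructor
  · exact farkas_aux n f g
  · rintro ⟨lam, hlam, rfl⟩ x hx
    simp only [LinearMap.coe_sum, Finset.sum_apply, LinearMap.smul_apply, smul_eq_mul]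
    exact Finset.sum_nonneg fun i _ => mul_nonneg (hlam i) (hx i)
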